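/- Let a > e² and b > 0, and set f(x) = (1 + a·exp(-x/b))·x for x ≥ 0. Then the equation f'(x) = 0 has exactly two solutions in (b, ∞), namely x₀ = b·(1 - W₀(-e/a)) and x₁ = b·(1 - W₋₁(-e/a)), where W₀ and W₋₁ are the two real branches of the Lambert W function; moreover b < x₀ < 2b < x₁, f''(x₀) < 0 and f''(x₁) > 0. -/

import Mathlib

open Real

theorem stmt_13 (a b : ℝ) (ha : Real.exp 1 ^ 2 < a) (hb : 0 < b)
    (f : ℝ → ℝ) (hf : f = fun x : ℝ => (1 + a * Real.exp (-x / b)) * x)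
    (w0 w1 : ℝ) (hw0 : -1 ≤ w0 ∧ w0 * Real.exp w0 = -(Real.exp 1) / a)
    (hw1 : w1 ≤ -1 ∧ w1 * Real.exp w1 = -(Real.exp 1) / a)
    (x0 x1 : ℝ) (hx0 : x0 = b * (1 - w0)) (hx1 : x1 = b * (1 - w1)) :
    (∀ x : ℝ, b < x → (deriv f x = 0 ↔ x = x0 ∨ x = x1)) ∧
    b < x0 ∧ x0 < 2 * b ∧ 2 * b < x1 ∧
    deriv (deriv f) x0 < 0 ∧ 0 < deriv (deriv f) x1 := by
  obtain ⟨hw0a, hw0b⟩ := hw0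
  obtain ⟨hw1a, hw1b⟩ := hw1
  have he : (0:ℝ) < Real.exp 1 := Real.exp_pos 1
  have ha0 : (0:ℝ) < a := lt_trans (by positivity) ha
  have hb' : b ≠ 0 := ne_of_gt hb
  -- strictness of w0 and w1
  have hw0gt : -1 < w0 := by
    rcases lt_or_eq_of_le hw0a with h | h
    · exact h
    · exfalso
      rw [← h] at hw0b
      have hexn : Real.exp (-1 : ℝ) = (Real.exp 1)⁻¹ := Real.exp_neg 1
      rw [hexn] at hw0b
      field_simp at hw0b
      nlinarith [Real.exp_pos 1]
  have hw1lt : w1 < -1 := by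
    rcases lt_or_eq_of_le hw1a with h | h
    · exact h
    · exfalso
      rw [h] at hw1b
      have hexn : Real.exp (-1 : ℝ) = (Real.exp 1)⁻¹ := Real.exp_neg 1
      rw [hexn] at hw1b
      field_simp at hw1b
      nlinarith [Real.exp_pos 1]
  have hw0neg : w0 < 0 := by
    by_contra h
    push_neg at h
    have h1 : 0 ≤ w0 * Real.exp w0 := mul_nonneg h (Real.exp_pos w0).le
    rw [hw0b] at h1
    have : -(Real.exp 1) / a < 0 := div_neg_of_neg_of_pos (by linarith) ha0
    linarith
  -- monotonicity of z * exp z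
  have hgd : ∀ z : ℝ, HasDerivAt (fun z : ℝ => z * Real.exp z) ((z + 1) * Real.exp z) z := by
    intro z
    have := (hasDerivAt_id z).mul (Real.hasDerivAt_exp z)
    exact this.congr_deriv (by simp only [id]; ring)
  have hmono : StrictMonoOn (fun z : ℝ => z * Real.exp z) (Set.Ici (-1 : ℝ)) := by
    apply strictMonoOn_of_deriv_pos (convex_Ici _)
    · exact (Continuous.mul continuous_id Real.continuous_exp).continuousOn
    · intro z hz
      rw [interior_Ici] at hz
      rw [(hgd z).deriv]
      exact mul_pos (by linarith [Set.mem_Ioi.1 hz]) (Real.exp_pos z)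
  have hanti : StrictAntiOn (fun z : ℝ => z * Real.exp z) (Set.Iic (-1 : ℝ)) := by
    apply strictAntiOn_of_deriv_neg (convex_Iic _)
    · exact (Continuous.mul continuous_id Real.continuous_exp).continuousOn
    · intro z hz
      rw [interior_Iic] at hz
      rw [(hgd z).deriv]
      exact mul_neg_of_neg_of_pos (by linarith [Set.mem_Iio.1 hz]) (Real.exp_pos z)
  have huniq : ∀ z : ℝ, z * Real.exp z = -(Real.exp 1) / a → z = w0 ∨ z = w1 := by
    intro z hz
    rcases le_total (-1 : ℝ) z with h | h
    · left
      exact hmono.injOn (Set.mem_Ici.2 h) (Set.mem_Ici.2 hw0a) (hz.trans hw0b.symm)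
    · right
      exact hanti.injOn (Set.mem_Iic.2 h) (Set.mem_Iic.2 hw1a) (hz.trans hw1b.symm)
  -- derivative of f
  have hfd : ∀ x : ℝ, HasDerivAt f (1 + a * Real.exp (-x / b) * (1 - x / b)) x := by
    intro x
    have h1 : HasDerivAt (fun x : ℝ => -x / b) (-1 / b) x := by
      simpa using ((hasDerivAt_id x).neg.div_const b)
    have h2 := h1.exp
    have h3 := (h2.const_mul a).const_add 1
    have h4 := h3.mul (hasDerivAt_id x)
    rw [hf]
    exact h4.congr_deriv (by simp only [id]; ring)
  have hdf : deriv f = fun x : ℝ => 1 + a * Real.exp (-x / b) * (1 - x / b) :=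
    funext fun x => (hfd x).deriv
  -- second derivative
  have hfd2 : ∀ x : ℝ, HasDerivAt (deriv f)
      (a * (Real.exp (-x / b) * (-1 / b)) * (1 - x / b) + a * Real.exp (-x / b) * (-(1 / b))) x := by
    intro x
    rw [hdf]
    have h1 : HasDerivAt (fun x : ℝ => -x / b) (-1 / b) x := by
      simpa using ((hasDerivAt_id x).neg.div_const b)
    have h2 := h1.exp
    have hsub : HasDerivAt (fun x : ℝ => 1 - x / b) (-(1 / b)) x :=
      ((hasDerivAt_id x).div_const b).const_sub 1
    exact (((h2.const_mul a).mul hsub).const_add 1)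
  refine ⟨?_, ?_, ?_, ?_, ?_, ?_⟩
  · intro x hx
    have hxz : 1 - x / b < 0 := by
      have : 1 < x / b := (one_lt_div hb).2 hx
      linarith
    constructor
    · intro h0
      rw [(hfd x).deriv] at h0
      have hex : Real.exp (-x / b) = Real.exp (1 - x / b) / Real.exp 1 := by
        rw [← Real.exp_sub]; ring_nf
      rw [hex] at h0
      have hzz : (1 - x / b) * Real.exp (1 - x / b) = -(Real.exp 1) / a := by
        field_simp at h0 ⊢
        nlinarith [Real.exp_pos 1]
      rcases huniq _ hzz with h | h
      · left
        rw [hx0]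
        field_simp at h
        linarith
      · right
        rw [hx1]
        field_simp at h
        linarith
    · intro h
      rcases h with h | h
      · rw [(hfd x).deriv, h, hx0]
        have e2 : 1 - b * (1 - w0) / b = w0 := by field_simp; ring
        have e1 : -(b * (1 - w0)) / b = w0 - 1 := by field_simp; ring
        have hw0b' : a * (w0 * Real.exp w0) = -Real.exp 1 := by
          rw [hw0b]; field_simp
        rw [e1, e2, Real.exp_sub]
        field_simp
        linear_combination hw0b'
      · rw [(hfd x).deriv, h, hx1]
        have e2 : 1 - b * (1 - w1) / b = w1 := by field_simp; ring
        have e1 : -(b * (1 - w1)) / b = w1 - 1 := by field_simp; ring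
        have hw1b' : a * (w1 * Real.exp w1) = -Real.exp 1 := by
          rw [hw1b]; field_simp
        rw [e1, e2, Real.exp_sub]
        field_simp
        linear_combination hw1b'
  · rw [hx0]; nlinarith
  · rw [hx0]; nlinarith
  · rw [hx1]; nlinarith
  · have hE : deriv (deriv f) x0 = -(a * Real.exp (-x0 / b) * (1 + w0) / b) := by
      rw [(hfd2 x0).deriv, hx0]
      field_simp
      ring
    rw [hE]
    have ht := Real.exp_pos (-x0 / b)
    have : 0 < a * Real.exp (-x0 / b) * (1 + w0) / b :=
      div_pos (mul_pos (mul_pos ha0 ht) (by linarith)) hb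
    linarith
  · have hE : deriv (deriv f) x1 = -(a * Real.exp (-x1 / b) * (1 + w1) / b) := by
      rw [(hfd2 x1).deriv, hx1]
      field_simp
      ring
    have ht := Real.exp_pos (-x1 / b)
    have h2 : 0 < a * Real.exp (-x1 / b) * (-(1 + w1)) / b :=
      div_pos (mul_pos (mul_pos ha0 ht) (by linarith)) hb
    have heq : a * Real.exp (-x1 / b) * (-(1 + w1)) / b
        = -(a * Real.exp (-x1 / b) * (1 + w1) / b) := by ring
    rw [hE, ← heq]
    exact h2
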